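/- Let n ≥ 3, K ≥ 1, and let (f, g) be a K-cinematic pair of maps ℝ^{n−2} → ℝ^{n−1} on [0,1]^{n−2}. Set d := ‖f − g‖_{C²([0,1]^{n−2})} and let δ be a real number with 0 < δ ≤ d. Then L^{2n−3}( f^δ([0,1]^{n−2}) ∩ g^δ([0,1]^{n−2}) ) ≤ C(n,K) · δ^{2n−3} / d^{n−2}, where C(n,K) is a constant depending only on n and K. -/

import Mathlib

open MeasureTheory Set
open scoped ENNReal NNReal

/-- The unit cube `[0,1]^m` in `ℝ^m`. -/
def unitCube (m : ℕ) : Set (EuclideanSpace ℝ (Fin m)) :=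
  {x | ∀ i, x i ∈ Set.Icc (0:ℝ) 1}

/-- The `C²` norm of a map on a subset: `sup_{x ∈ D} max(|h x|, ‖Dh x‖, ‖D²h x‖)`. -/
noncomputable def C2NormOn {m l : ℕ}
    (h : EuclideanSpace ℝ (Fin m) → EuclideanSpace ℝ (Fin l))
    (D : Set (EuclideanSpace ℝ (Fin m))) : ℝ :=
  ⨆ x ∈ D, max ‖h x‖ (max ‖fderiv ℝ h x‖ ‖fderiv ℝ (fderiv ℝ h) x‖)

/-- A `K`-cinematic pair of maps on `[0,1]^m`. -/
def CinematicPair {m l : ℕ} (K : ℝ)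
    (f g : EuclideanSpace ℝ (Fin m) → EuclideanSpace ℝ (Fin l)) : Prop :=
  ContDiff ℝ 2 f ∧ ContDiff ℝ 2 g ∧
  C2NormOn f (unitCube m) ≤ K ∧ C2NormOn g (unitCube m) ≤ K ∧
  ∀ x ∈ unitCube m, ∀ ξ : EuclideanSpace ℝ (Fin m), ‖ξ‖ = 1 →
    K⁻¹ * C2NormOn (f - g) (unitCube m) ≤ ‖f x - g x‖ + ‖fderiv ℝ f x ξ - fderiv ℝ g x ξ‖

/-- The vertical `η`-neighbourhood of the graph of `f` over `D`. -/
def vertNbhd {m l : ℕ} (f : EuclideanSpace ℝ (Fin m) → EuclideanSpace ℝ (Fin l))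
    (D : Set (EuclideanSpace ℝ (Fin m))) (η : ℝ) :
    Set (EuclideanSpace ℝ (Fin m) × EuclideanSpace ℝ (Fin l)) :=
  {p | p.1 ∈ D ∧ ‖p.2 - f p.1‖ < η}

lemma unitCube_eq (m : ℕ) :
    unitCube m = (⇑(EuclideanSpace.equiv (Fin m) ℝ)) ⁻¹'
      (Set.univ.pi fun _ => Set.Icc (0:ℝ) 1) := by
  ext x
  simp only [unitCube, Set.mem_setOf_eq, Set.mem_preimage, Set.mem_univ_pi]
  rfl

lemma isCompact_unitCube (m : ℕ) : IsCompact (unitCube m) := by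
  rw [unitCube_eq]
  exact ((EuclideanSpace.equiv (Fin m) ℝ).toHomeomorph.isCompact_preimage).2
    (isCompact_univ_pi fun _ => isCompact_Icc)

lemma isClosed_unitCube (m : ℕ) : IsClosed (unitCube m) := by
  rw [unitCube_eq]
  exact (isClosed_set_pi fun i _ => isClosed_Icc).preimage
    (EuclideanSpace.equiv (Fin m) ℝ).continuous

lemma convex_unitCube (m : ℕ) : Convex ℝ (unitCube m) := by
  intro x hx y hy a b ha hb hab i
  have := (convex_Icc (0:ℝ) 1) (hx i) (hy i) ha hb hab
  simpa using this

lemma unitCube_subset_closedBall (m : ℕ) :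
    unitCube m ⊆ Metric.closedBall 0 m := by
  intro x hx
  rw [Metric.mem_closedBall, dist_zero_right]
  have h1 : ‖x‖ ≤ Real.sqrt m := by
    rw [EuclideanSpace.norm_eq]
    apply Real.sqrt_le_sqrt
    calc ∑ i, ‖x i‖ ^ 2 ≤ ∑ _i : Fin m, (1:ℝ) := by
          apply Finset.sum_le_sum
          intro i _
          have h := hx i
          have : |x i| ≤ 1 := abs_le.2 ⟨by linarith [h.1], h.2⟩
          calc ‖x i‖^2 = |x i|^2 := by rw [Real.norm_eq_abs]
            _ ≤ 1^2 := by apply pow_le_pow_left₀ (abs_nonneg _) this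
            _ = 1 := one_pow 2
      _ = m := by simp
  rcases Nat.eq_zero_or_pos m with hm | hm
  · subst hm; simpa using h1
  · refine h1.trans ?_
    have h2 : (m:ℝ) ≤ (m:ℝ)^2 := by nlinarith [(Nat.one_le_cast (α := ℝ)).2 hm]
    calc Real.sqrt m ≤ Real.sqrt ((m:ℝ)^2) := Real.sqrt_le_sqrt h2
      _ = m := Real.sqrt_sq (Nat.cast_nonneg m)

lemma le_C2NormOn {m l : ℕ} {h : EuclideanSpace ℝ (Fin m) → EuclideanSpace ℝ (Fin l)}
    {D : Set (EuclideanSpace ℝ (Fin m))} {M : ℝ}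
    (hb : ∀ y ∈ D, max ‖h y‖ (max ‖fderiv ℝ h y‖ ‖fderiv ℝ (fderiv ℝ h) y‖) ≤ M)
    {x : EuclideanSpace ℝ (Fin m)} (hx : x ∈ D) :
    max ‖h x‖ (max ‖fderiv ℝ h x‖ ‖fderiv ℝ (fderiv ℝ h) x‖) ≤ C2NormOn h D := by
  have hM : 0 ≤ M := le_trans (le_trans (norm_nonneg _) (le_max_left _ _)) (hb x hx)
  have hbdd : BddAbove (Set.range fun y =>
      ⨆ _ : y ∈ D, max ‖h y‖ (max ‖fderiv ℝ h y‖ ‖fderiv ℝ (fderiv ℝ h) y‖)) := by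
    refine ⟨M, ?_⟩
    rintro _ ⟨y, rfl⟩
    dsimp only
    by_cases hy : y ∈ D
    · rw [ciSup_pos hy]; exact hb y hy
    · simp only [hy]
      rw [Real.iSup_of_isEmpty]
      exact hM
  calc max ‖h x‖ (max ‖fderiv ℝ h x‖ ‖fderiv ℝ (fderiv ℝ h) x‖)
      = ⨆ _ : x ∈ D, max ‖h x‖ (max ‖fderiv ℝ h x‖ ‖fderiv ℝ (fderiv ℝ h) x‖) :=
        (ciSup_pos (f := fun _ => max ‖h x‖ (max ‖fderiv ℝ h x‖ ‖fderiv ℝ (fderiv ℝ h) x‖)) hx).symm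
    _ ≤ C2NormOn h D := le_ciSup hbdd x

lemma vol_vert_eq {m l : ℕ} (f : EuclideanSpace ℝ (Fin m) → EuclideanSpace ℝ (Fin l))
    (hf : Continuous f) (E : Set (EuclideanSpace ℝ (Fin m))) (hE : MeasurableSet E) (δ : ℝ) :
    volume {p : EuclideanSpace ℝ (Fin m) × EuclideanSpace ℝ (Fin l) |
        p.1 ∈ E ∧ p.2 ∈ Metric.ball (f p.1) δ}
      = volume E * volume (Metric.ball (0 : EuclideanSpace ℝ (Fin l)) δ) := by
  set S : Set (EuclideanSpace ℝ (Fin m) × EuclideanSpace ℝ (Fin l)) :=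
    {p | p.1 ∈ E ∧ p.2 ∈ Metric.ball (f p.1) δ} with hS_def
  have hS : MeasurableSet S := by
    have h1 : S = (Prod.fst ⁻¹' E) ∩ {p : EuclideanSpace ℝ (Fin m) × EuclideanSpace ℝ (Fin l) |
        dist p.2 (f p.1) < δ} := by
      ext p; simp [hS_def, Metric.mem_ball]
    rw [h1]
    exact (hE.preimage measurable_fst).inter
      ((isOpen_lt (continuous_snd.dist (hf.comp continuous_fst)) continuous_const).measurableSet)
  rw [Measure.volume_eq_prod, Measure.prod_apply hS]
  have hfib : ∀ x, volume (Prod.mk x ⁻¹' S)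
      = E.indicator (fun _ => volume (Metric.ball (0 : EuclideanSpace ℝ (Fin l)) δ)) x := by
    intro x
    by_cases hx : x ∈ E
    · have h2 : Prod.mk x ⁻¹' S = Metric.ball (f x) δ := by
        ext y; simp [hS_def, hx]
      rw [h2, Measure.addHaar_ball_center, Set.indicator_of_mem hx]
    · have h2 : Prod.mk x ⁻¹' S = ∅ := by
        ext y; simp [hS_def, hx]
      rw [h2, measure_empty, Set.indicator_of_notMem hx]
  simp_rw [hfib]
  rw [lintegral_indicator hE, setLIntegral_const, mul_comm]

set_option maxHeartbeats 1600000 in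
theorem stmt6 (n : ℕ) (hn : 3 ≤ n) (K : ℝ) (hK : 1 ≤ K) :
    ∃ C : ℝ, 0 < C ∧
      ∀ f g : EuclideanSpace ℝ (Fin (n-2)) → EuclideanSpace ℝ (Fin (n-1)),
        CinematicPair K f g →
        ∀ δ : ℝ, 0 < δ → δ ≤ C2NormOn (f - g) (unitCube (n-2)) →
          volume (vertNbhd f (unitCube (n-2)) δ ∩ vertNbhd g (unitCube (n-2)) δ)
            ≤ ENNReal.ofReal
                (C * δ ^ (2*n-3) / C2NormOn (f - g) (unitCube (n-2)) ^ (n-2)) := by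
  have hK0 : (0:ℝ) < K := lt_of_lt_of_le one_pos hK
  have hm1 : 1 ≤ n - 2 := by omega
  obtain ⟨t, hts, htfin, htcov⟩ :=
    (isCompact_unitCube (n-2)).finite_cover_balls (e := (4*K)⁻¹) (by positivity)
  set Bm : ℝ≥0∞ := volume (Metric.closedBall (0 : EuclideanSpace ℝ (Fin (n-2))) 1) with hBm
  set Bl : ℝ≥0∞ := volume (Metric.ball (0 : EuclideanSpace ℝ (Fin (n-1))) 1) with hBl
  have hBm_top : Bm ≠ ⊤ := measure_closedBall_lt_top.ne
  have hBl_top : Bl ≠ ⊤ := measure_ball_lt_top.ne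
  have hBm_pos : (0:ℝ≥0∞) < Bm :=
    lt_of_lt_of_le (Metric.measure_ball_pos volume _ one_pos)
      (measure_mono Metric.ball_subset_closedBall)
  have hBl_pos : (0:ℝ≥0∞) < Bl := Metric.measure_ball_pos volume _ one_pos
  set bm := Bm.toReal with hbm_def
  set bl := Bl.toReal with hbl_def
  have hbm : 0 < bm := ENNReal.toReal_pos hBm_pos.ne' hBm_top
  have hbl : 0 < bl := ENNReal.toReal_pos hBl_pos.ne' hBl_top
  set N : ℕ := htfin.toFinset.card with hN
  set P : ℝ := ((n-2:ℕ):ℝ)^(n-2) with hP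
  have hP1 : (1:ℝ) ≤ P := one_le_pow₀ (by exact_mod_cast hm1)
  have hNP : (0:ℝ) < (N:ℝ) + P := by
    have : (0:ℝ) ≤ (N:ℝ) := Nat.cast_nonneg N
    linarith
  refine ⟨((N:ℝ) + P) * (16*K)^(n-2) * bm * bl, by positivity, ?_⟩
  intro f g hcin δ hδ hδd
  obtain ⟨hf, hg, -, -, hcinem⟩ := hcin
  obtain ⟨d, hd_def⟩ : ∃ d', C2NormOn (f - g) (unitCube (n-2)) = d' := ⟨_, rfl⟩
  rw [hd_def] at hδd hcinem ⊢
  have hd : 0 < d := lt_of_lt_of_le hδ hδd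
  -- smoothness facts
  have hh : ContDiff ℝ 2 (f - g) := hf.sub hg
  have hh1 : ContDiff ℝ 1 (fderiv ℝ (f - g)) := hh.fderiv_right (by norm_num)
  have hh0 : Continuous (fderiv ℝ (fderiv ℝ (f - g))) :=
    (hh1.fderiv_right (m := 0) (by norm_num)).continuous
  have hdiff : ∀ x, DifferentiableAt ℝ (f - g) x :=
    fun x => (hh.differentiable two_ne_zero).differentiableAt
  have hdiff' : ∀ x, DifferentiableAt ℝ (fderiv ℝ (f - g)) x :=
    fun x => (hh1.differentiable one_ne_zero).differentiableAt
  have hfd : Differentiable ℝ f := hf.differentiable two_ne_zero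
  have hgd : Differentiable ℝ g := hg.differentiable two_ne_zero
  -- pointwise bounds by d
  have hFcont : Continuous (fun y =>
      max ‖(f - g) y‖ (max ‖fderiv ℝ (f - g) y‖ ‖fderiv ℝ (fderiv ℝ (f - g)) y‖)) :=
    (hh.continuous.norm).max ((hh1.continuous.norm).max (Continuous.norm (E := EuclideanSpace ℝ (Fin (n-2)) →L[ℝ] EuclideanSpace ℝ (Fin (n-2)) →L[ℝ] EuclideanSpace ℝ (Fin (n-1))) hh0))
  obtain ⟨M, hM⟩ :=
    (isCompact_unitCube (n-2)).exists_bound_of_continuousOn hFcont.continuousOn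
  have hble : ∀ y ∈ unitCube (n-2),
      max ‖(f - g) y‖ (max ‖fderiv ℝ (f - g) y‖ ‖fderiv ℝ (fderiv ℝ (f - g)) y‖) ≤ M := by
    intro y hy
    have := hM y hy
    rw [Real.norm_eq_abs] at this
    exact (le_abs_self _).trans this
  have hpt : ∀ x ∈ unitCube (n-2),
      max ‖(f - g) x‖ (max ‖fderiv ℝ (f - g) x‖ ‖fderiv ℝ (fderiv ℝ (f - g)) x‖) ≤ d :=
    fun x hx => hd_def ▸ le_C2NormOn hble hx
  have hb1 : ∀ x ∈ unitCube (n-2), ‖(f - g) x‖ ≤ d :=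
    fun x hx => (le_max_left _ _).trans (hpt x hx)
  have hb3 : ∀ x ∈ unitCube (n-2), ‖fderiv ℝ (fderiv ℝ (f - g)) x‖ ≤ d :=
    fun x hx => ((le_max_right _ _).trans (le_max_right _ _)).trans (hpt x hx)
  -- the exceptional set E
  set E := {x : EuclideanSpace ℝ (Fin (n-2)) | x ∈ unitCube (n-2) ∧ ‖(f - g) x‖ < 2*δ}
    with hE_def
  have hEmeas : MeasurableSet E :=
    ((isClosed_unitCube (n-2)).measurableSet).inter
      (isOpen_lt (hh.continuous.norm) continuous_const).measurableSet
  have hsubset : vertNbhd f (unitCube (n-2)) δ ∩ vertNbhd g (unitCube (n-2)) δ ⊆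
      {p : EuclideanSpace ℝ (Fin (n-2)) × EuclideanSpace ℝ (Fin (n-1)) |
        p.1 ∈ E ∧ p.2 ∈ Metric.ball (f p.1) δ} := by
    rintro ⟨x, y⟩ ⟨⟨hx1, hx2⟩, ⟨-, hx3⟩⟩
    refine ⟨⟨hx1, ?_⟩, ?_⟩
    · have heq : (f - g) x = (y - g x) - (y - f x) := by
        simp only [Pi.sub_apply]; abel
      calc ‖(f - g) x‖ = ‖(y - g x) - (y - f x)‖ := by rw [heq]
        _ ≤ ‖y - g x‖ + ‖y - f x‖ := norm_sub_le _ _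
        _ < δ + δ := add_lt_add hx3 hx2
        _ = 2*δ := by ring
    · rw [mem_ball_iff_norm]; exact hx2
  have hvol1 : volume (vertNbhd f (unitCube (n-2)) δ ∩ vertNbhd g (unitCube (n-2)) δ)
      ≤ volume E * volume (Metric.ball (0 : EuclideanSpace ℝ (Fin (n-1))) δ) := by
    rw [← vol_vert_eq f hf.continuous E hEmeas δ]
    exact measure_mono hsubset
  set r := 16*K*δ/d with hr_def
  have hr0 : (0:ℝ) < r := by positivity
  -- the key measure bound on E
  have hE_bound : volume E ≤ ENNReal.ofReal (((N:ℝ) + P) * r^(n-2)) * Bm := by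
    by_cases hcase : d ≤ 8*K*δ
    · -- trivial case : δ comparable to d
      have hr2 : (1:ℝ) ≤ r := by
        rw [hr_def, le_div_iff₀ hd, one_mul]
        nlinarith
      have hEsub : E ⊆ Metric.closedBall 0 ((n-2:ℕ):ℝ) :=
        fun x hx => unitCube_subset_closedBall _ hx.1
      have h1 : volume E ≤ ENNReal.ofReal (((n-2:ℕ):ℝ)^(n-2)) * Bm := by
        refine (measure_mono hEsub).trans ?_
        rw [Measure.addHaar_closedBall' _ _ (Nat.cast_nonneg _), finrank_euclideanSpace_fin]
      refine h1.trans ?_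
      gcongr
      have hrm : (1:ℝ) ≤ r^(n-2) := one_le_pow₀ hr2
      have hN0 : (0:ℝ) ≤ (N:ℝ) := Nat.cast_nonneg N
      have h2 : P * 1 ≤ P * r^(n-2) :=
        mul_le_mul_of_nonneg_left hrm (by linarith)
      have h3 : (0:ℝ) ≤ (N:ℝ) * r^(n-2) := mul_nonneg hN0 (by linarith)
      rw [hP]
      nlinarith [h2, h3]
    · -- main case : transversality
      have hcase' : 8*K*δ < d := lt_of_not_ge hcase
      have key : ∀ y ∈ E, ∀ x ∈ E, ‖x - y‖ ≤ (2*K)⁻¹ → ‖x - y‖ ≤ r := by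
        intro y hy x hx hxy
        rcases eq_or_ne x y with rfl | hne
        · simpa using hr0.le
        have hxy0 : (0:ℝ) < ‖x - y‖ := by
          rw [norm_pos_iff]; exact sub_ne_zero.2 hne
        set ξ := (‖x - y‖)⁻¹ • (x - y) with hξdef
        have hξ : ‖ξ‖ = 1 := norm_smul_inv_norm (sub_ne_zero.2 hne)
        have hc := hcinem y hy.1 ξ hξ
        have hfg : fderiv ℝ (f - g) y = fderiv ℝ f y - fderiv ℝ g y := by
          have h0 := fderiv_sub (𝕜 := ℝ) (hfd y) (hgd y)
          simpa [Pi.sub_def] using h0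
        have hDlow : K⁻¹ * d - 2*δ ≤ ‖fderiv ℝ (f - g) y ξ‖ := by
          have h1 : ‖f y - g y‖ = ‖(f - g) y‖ := by simp [Pi.sub_apply]
          have h2 : ‖fderiv ℝ f y ξ - fderiv ℝ g y ξ‖ = ‖fderiv ℝ (f - g) y ξ‖ := by
            rw [hfg]; simp
          rw [h1, h2] at hc
          have := hy.2
          linarith
        have happ : fderiv ℝ (f - g) y ξ = (‖x - y‖)⁻¹ • fderiv ℝ (f - g) y (x - y) := by
          rw [hξdef, ContinuousLinearMap.map_smul]
        have hnormapp : ‖fderiv ℝ (f - g) y ξ‖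
            = (‖x - y‖)⁻¹ * ‖fderiv ℝ (f - g) y (x - y)‖ := by
          rw [happ, norm_smul, norm_inv, norm_norm]
        have hlow2 : (K⁻¹ * d - 2*δ) * ‖x - y‖ ≤ ‖fderiv ℝ (f - g) y (x - y)‖ := by
          have h4 := mul_le_mul_of_nonneg_right hDlow hxy0.le
          rw [hnormapp] at h4
          calc (K⁻¹ * d - 2*δ) * ‖x - y‖
              ≤ (‖x - y‖)⁻¹ * ‖fderiv ℝ (f - g) y (x - y)‖ * ‖x - y‖ := h4
            _ = ‖fderiv ℝ (f - g) y (x - y)‖ := by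
                field_simp
        have lip : ∀ z ∈ unitCube (n-2),
            ‖fderiv ℝ (f - g) z - fderiv ℝ (f - g) y‖ ≤ d * ‖z - y‖ := by
          intro z hz
          exact (convex_unitCube (n-2)).norm_image_sub_le_of_norm_fderiv_le
            (fun w _ => hdiff' w) hb3 hy.1 hz
        set φ := fun z => (f - g) z - (fderiv ℝ (f - g) y) z with hφ
        have hφdiff : ∀ z, DifferentiableAt ℝ φ z :=
          fun z => (hdiff z).sub ((fderiv ℝ (f - g) y).differentiableAt)
        have hφder : ∀ z, fderiv ℝ φ z = fderiv ℝ (f - g) z - fderiv ℝ (f - g) y := by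
          intro z
          rw [hφ, fderiv_fun_sub (hdiff z) ((fderiv ℝ (f - g) y).differentiableAt)]
          congr 1
          exact ContinuousLinearMap.fderiv _
        set s := unitCube (n-2) ∩ Metric.closedBall y (2*K)⁻¹ with hs
        have hconv : Convex ℝ s := (convex_unitCube _).inter (convex_closedBall _ _)
        have hxs : x ∈ s := ⟨hx.1, by rw [Metric.mem_closedBall, dist_eq_norm]; exact hxy⟩
        have hys : y ∈ s := ⟨hy.1, Metric.mem_closedBall_self (by positivity)⟩
        have hbound : ∀ z ∈ s, ‖fderiv ℝ φ z‖ ≤ d * (2*K)⁻¹ := by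
          intro z hz
          rw [hφder z]
          refine (lip z hz.1).trans ?_
          have hz2 : ‖z - y‖ ≤ (2*K)⁻¹ := by rw [← dist_eq_norm]; exact hz.2
          exact mul_le_mul_of_nonneg_left hz2 hd.le
        have hmvt : ‖φ x - φ y‖ ≤ d * (2*K)⁻¹ * ‖x - y‖ :=
          hconv.norm_image_sub_le_of_norm_fderiv_le (fun w _ => hφdiff w) hbound hys hxs
        have hφeq : φ x - φ y = ((f - g) x - (f - g) y) - fderiv ℝ (f - g) y (x - y) := by
          rw [hφ]
          simp only [map_sub]
          abel
        have htri : ‖fderiv ℝ (f - g) y (x - y)‖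
            ≤ ‖(f - g) x - (f - g) y‖ + ‖φ x - φ y‖ := by
          have h5 : fderiv ℝ (f - g) y (x - y)
              = ((f - g) x - (f - g) y) - (φ x - φ y) := by rw [hφeq]; abel
          rw [h5]
          exact norm_sub_le _ _
        have hval : ‖(f - g) x - (f - g) y‖ < 4*δ := by
          calc ‖(f - g) x - (f - g) y‖ ≤ ‖(f - g) x‖ + ‖(f - g) y‖ := norm_sub_le _ _
            _ < 2*δ + 2*δ := add_lt_add hx.2 hy.2
            _ = 4*δ := by ring
        -- final algebra
        rw [hr_def, le_div_iff₀ hd]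
        have step : (K⁻¹ * d - 2*δ) * ‖x - y‖ ≤ 4*δ + d * (2*K)⁻¹ * ‖x - y‖ := by
          have h6 := htri.trans (add_le_add hval.le hmvt)
          linarith [hlow2]
        have step2 : d * ‖x - y‖ - 2*δ*K*‖x - y‖ ≤ 4*δ*K + d*‖x - y‖/2 := by
          have h7 := mul_le_mul_of_nonneg_left step hK0.le
          have e1 : K * ((K⁻¹*d - 2*δ) * ‖x - y‖) = d*‖x - y‖ - 2*δ*K*‖x - y‖ := by
            field_simp
          have e2 : K * (4*δ + d*(2*K)⁻¹*‖x - y‖) = 4*δ*K + d*‖x - y‖/2 := by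
            field_simp
          rw [e1, e2] at h7
          exact h7
        have hprod : 8*K*δ*‖x - y‖ ≤ d*‖x - y‖ :=
          mul_le_mul_of_nonneg_right hcase'.le hxy0.le
        nlinarith [step2, hprod]
      -- covering argument
      have hcover : E ⊆ ⋃ c ∈ htfin.toFinset, (E ∩ Metric.ball c (4*K)⁻¹) := by
        intro x hx
        have h8 := htcov hx.1
        simp only [Set.mem_iUnion] at h8 ⊢
        obtain ⟨c, hc, hcball⟩ := h8
        exact ⟨c, htfin.mem_toFinset.2 hc, hx, hcball⟩
      have hsum : volume E ≤ ∑ c ∈ htfin.toFinset, volume (E ∩ Metric.ball c (4*K)⁻¹) :=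
        (measure_mono hcover).trans (measure_biUnion_finset_le _ _)
      have heach : ∀ c ∈ htfin.toFinset,
          volume (E ∩ Metric.ball c (4*K)⁻¹) ≤ ENNReal.ofReal (r^(n-2)) * Bm := by
        intro c _
        rcases Set.eq_empty_or_nonempty (E ∩ Metric.ball c (4*K)⁻¹) with he | ⟨y, hy⟩
        · rw [he, measure_empty]; exact zero_le
        · have hsub2 : E ∩ Metric.ball c (4*K)⁻¹ ⊆ Metric.closedBall y r := by
            intro x hx
            rw [Metric.mem_closedBall, dist_eq_norm]
            apply key y hy.1 x hx.1
            have d1 : dist x c < (4*K)⁻¹ := hx.2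
            have d2 : dist y c < (4*K)⁻¹ := hy.2
            have d3 : dist x y < (4*K)⁻¹ + (4*K)⁻¹ :=
              lt_of_le_of_lt (dist_triangle_right x y c) (add_lt_add d1 d2)
            rw [dist_eq_norm] at d3
            have heq2 : (4*K)⁻¹ + (4*K)⁻¹ = (2*K)⁻¹ := by
              field_simp
              ring
            rw [heq2] at d3
            exact d3.le
          calc volume (E ∩ Metric.ball c (4*K)⁻¹) ≤ volume (Metric.closedBall y r) :=
                measure_mono hsub2
            _ = ENNReal.ofReal (r^(n-2)) * Bm := by
                rw [Measure.addHaar_closedBall' _ _ hr0.le, finrank_euclideanSpace_fin]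
      calc volume E ≤ ∑ c ∈ htfin.toFinset, volume (E ∩ Metric.ball c (4*K)⁻¹) := hsum
        _ ≤ ∑ _c ∈ htfin.toFinset, ENNReal.ofReal (r^(n-2)) * Bm :=
            Finset.sum_le_sum heach
        _ = (N : ℝ≥0∞) * (ENNReal.ofReal (r^(n-2)) * Bm) := by
            rw [Finset.sum_const, nsmul_eq_mul, hN]
        _ ≤ ENNReal.ofReal (((N:ℝ) + P) * r^(n-2)) * Bm := by
            rw [← ENNReal.ofReal_natCast N, ← mul_assoc,
              ← ENNReal.ofReal_mul (Nat.cast_nonneg N)]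
            gcongr
            linarith
  -- assemble
  have hball : volume (Metric.ball (0 : EuclideanSpace ℝ (Fin (n-1))) δ)
      = ENNReal.ofReal (δ^(n-1)) * Bl := by
    rw [Measure.addHaar_ball_of_pos _ _ hδ, finrank_euclideanSpace_fin]
  refine le_trans hvol1 ?_
  rw [hball]
  have hA0 : (0:ℝ) ≤ ((N:ℝ) + P) * r^(n-2) :=
    mul_nonneg hNP.le (pow_nonneg hr0.le _)
  have hB0 : (0:ℝ) ≤ δ^(n-1) := pow_nonneg hδ.le _
  calc volume E * (ENNReal.ofReal (δ^(n-1)) * Bl)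
      ≤ (ENNReal.ofReal (((N:ℝ) + P) * r^(n-2)) * Bm) * (ENNReal.ofReal (δ^(n-1)) * Bl) := by
        gcongr
    _ = ENNReal.ofReal ((((N:ℝ) + P) * r^(n-2)) * bm * (δ^(n-1) * bl)) := by
        rw [hbm_def, hbl_def]
        conv_lhs => rw [← ENNReal.ofReal_toReal hBm_top, ← ENNReal.ofReal_toReal hBl_top]
        rw [← ENNReal.ofReal_mul hA0, ← ENNReal.ofReal_mul hB0,
          ← ENNReal.ofReal_mul (mul_nonneg hA0 ENNReal.toReal_nonneg)]
    _ ≤ ENNReal.ofReal (((N:ℝ) + P) * (16*K)^(n-2) * bm * bl * δ^(2*n-3) / d^(n-2)) := by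
        apply ENNReal.ofReal_le_ofReal
        apply le_of_eq
        have hml : (2*n-3) = (n-2) + (n-1) := by omega
        rw [hml, pow_add, hr_def, div_pow, mul_pow]
        field_simp
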